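/- arXiv:2604.25854 — 3 statements merged into one kernel-verified Lean document; each statement's English description precedes it below -/
import Mathlib

section
/- Let G be an additive group and U a nonprincipal ultrafilter on G closed under countable intersections. For every state φ on ℓ∞(G) there exists a state ψ on ℓ∞(G) such that for every f ∈ ℓ∞(G) the function j ↦ φ(τ_j f) tends to ψ(f) along U; moreover, every state ψ with this property is singular, i.e. ν_ψ(I) = 0 for every finite I ⊆ G. -/
open scoped ENNReal
open Filter

/-- The indicator function of `I` as an element of `ℓ∞(κ)`. -/
noncomputable def chi {κ : Type*} (I : Set κ) : lp (fun _ : κ => ℂ) ∞ :=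
  ⟨I.indicator (fun _ => (1 : ℂ)), memℓp_infty ⟨1, by
    rintro x ⟨i, rfl⟩
    by_cases h : i ∈ I <;> simp [Set.indicator, h]⟩⟩

/-- A state on `ℓ∞(κ)`: a continuous linear functional with `φ 1 = 1` that takes
nonnegative real values on functions with nonnegative real values. -/
structure IsState {κ : Type*} (φ : lp (fun _ : κ => ℂ) ∞ →L[ℂ] ℂ) : Prop where
  map_one : φ 1 = 1
  nonneg : ∀ f : lp (fun _ : κ => ℂ) ∞,
    (∀ i, ∃ r : ℝ, 0 ≤ r ∧ f i = r) → ∃ r : ℝ, 0 ≤ r ∧ φ f = r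

/-- The translate `τ_j f`, `(τ_j f) i = f (i + j)`, as an element of `ℓ∞(G)`. -/
noncomputable def tau {G : Type*} [AddGroup G] (j : G) (f : lp (fun _ : G => ℂ) ∞) :
    lp (fun _ : G => ℂ) ∞ :=
  ⟨fun i => f (i + j), memℓp_infty ⟨‖f‖, by
    rintro x ⟨i, rfl⟩
    exact lp.norm_apply_le_norm ENNReal.top_ne_zero f (i + j)⟩⟩

section Aux

variable {G : Type*} [AddGroup G]

lemma tau_apply (j : G) (f : lp (fun _ : G => ℂ) ∞) (i : G) : tau j f i = f (i + j) := rfl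

lemma chi_apply {κ : Type*} (I : Set κ) (i : κ) :
    chi I i = I.indicator (fun _ => (1 : ℂ)) i := rfl

lemma norm_tau_le (j : G) (f : lp (fun _ : G => ℂ) ∞) : ‖tau j f‖ ≤ ‖f‖ :=
  lp.norm_le_of_forall_le (norm_nonneg f) fun i =>
    lp.norm_apply_le_norm ENNReal.top_ne_zero f (i + j)

lemma tau_add (j : G) (f g : lp (fun _ : G => ℂ) ∞) :
    tau j (f + g) = tau j f + tau j g := by
  apply lp.ext
  funext i
  simp only [lp.coeFn_add, Pi.add_apply, tau_apply]

lemma tau_smul (j : G) (c : ℂ) (f : lp (fun _ : G => ℂ) ∞) :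
    tau j (c • f) = c • tau j f := by
  apply lp.ext
  funext i
  simp only [lp.coeFn_smul, Pi.smul_apply, tau_apply]

lemma tau_one (j : G) : tau j (1 : lp (fun _ : G => ℂ) ∞) = 1 := by
  apply lp.ext
  funext i
  simp only [tau_apply, lp.infty_coeFn_one, Pi.one_apply]

lemma chi_nonneg_entries {κ : Type*} (I : Set κ) :
    ∀ i, ∃ r : ℝ, 0 ≤ r ∧ chi I i = r := by
  intro i
  by_cases h : i ∈ I
  · exact ⟨1, zero_le_one, by simp [chi_apply, Set.indicator, h]⟩
  · exact ⟨0, le_refl _, by simp [chi_apply, Set.indicator, h]⟩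

lemma chi_empty {κ : Type*} : chi (∅ : Set κ) = 0 := by
  apply lp.ext
  funext i
  simp [chi_apply, lp.coeFn_zero]

lemma chi_insert {κ : Type*} (a : κ) (T : Set κ) (ha : a ∉ T) :
    chi (insert a T) = chi ({a} : Set κ) + chi T := by
  apply lp.ext
  funext i
  simp only [lp.coeFn_add, Pi.add_apply, chi_apply]
  by_cases h1 : i = a
  · subst h1
    simp [Set.indicator, ha]
  · by_cases h2 : i ∈ T <;> simp [Set.indicator, h1, h2]

lemma tau_chi_singleton (j a : G) :
    tau j (chi ({a} : Set G)) = chi ({a - j} : Set G) := by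
  apply lp.ext
  funext i
  simp only [tau_apply, chi_apply]
  have : i + j ∈ ({a} : Set G) ↔ i ∈ ({a - j} : Set G) := by
    simp [eq_sub_iff_add_eq]
  by_cases h : i + j ∈ ({a} : Set G)
  · rw [Set.indicator_of_mem h, Set.indicator_of_mem (this.1 h)]
  · rw [Set.indicator_of_notMem h, Set.indicator_of_notMem (fun hh => h (this.2 hh))]

variable (φ : lp (fun _ : G => ℂ) ∞ →L[ℂ] ℂ)

/-- φ(chi S) is a nonneg real. -/
lemma state_chi (hφ : IsState φ) (S : Set G) : ∃ r : ℝ, 0 ≤ r ∧ φ (chi S) = r :=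
  hφ.nonneg _ (chi_nonneg_entries S)

lemma state_chi_le_one (hφ : IsState φ) (S : Set G) : (φ (chi S)).re ≤ 1 := by
  obtain ⟨r, hr, hrr⟩ := hφ.nonneg ((1 : lp (fun _ : G => ℂ) ∞) - chi S) (by
    intro i
    by_cases h : i ∈ S
    · exact ⟨0, le_refl _, by
        show (1 : ℂ) - chi S i = _
        simp [lp.coeFn_sub, Pi.sub_apply, lp.infty_coeFn_one, chi_apply, Set.indicator, h]⟩
    · exact ⟨1, zero_le_one, by
        show (1 : ℂ) - chi S i = _
        simp [lp.coeFn_sub, Pi.sub_apply, lp.infty_coeFn_one, chi_apply, Set.indicator, h]⟩)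
  have : φ (chi S) = 1 - r := by
    have := map_sub φ (1 : lp (fun _ : G => ℂ) ∞) (chi S)
    rw [hrr, hφ.map_one] at this
    have := this.symm
    linear_combination -this
  rw [this]
  simp [hr]

lemma state_finset_sum (T : Finset G) :
    φ (chi (↑T : Set G)) = ∑ x ∈ T, φ (chi ({x} : Set G)) := by
  classical
  induction T using Finset.induction_on with
  | empty => simp [chi_empty]
  | @insert a s h ih =>
    rw [Finset.coe_insert, chi_insert a _ (by simpa using h), map_add, ih,
      Finset.sum_insert h]

lemma level_set_finite (hφ : IsState φ) {ε : ℝ} (hε : 0 < ε) :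
    {x : G | ε ≤ (φ (chi ({x} : Set G))).re}.Finite := by
  by_contra hinf
  have hinf : Set.Infinite {x : G | ε ≤ (φ (chi ({x} : Set G))).re} := hinf
  obtain ⟨n, hn⟩ := exists_nat_gt (1 / ε)
  obtain ⟨T, hT, hTcard⟩ := hinf.exists_subset_card_eq (n + 1)
  have hsum : (φ (chi (↑T : Set G))).re = ∑ x ∈ T, (φ (chi ({x} : Set G))).re := by
    rw [state_finset_sum φ]
    exact Complex.re_sum T _
  have hge : (n + 1 : ℝ) * ε ≤ (φ (chi (↑T : Set G))).re := by
    rw [hsum]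
    calc (n + 1 : ℝ) * ε = ∑ _x ∈ T, ε := by
          rw [Finset.sum_const, hTcard]; push_cast; ring
      _ ≤ ∑ x ∈ T, (φ (chi ({x} : Set G))).re :=
          Finset.sum_le_sum fun x hx => hT hx
  have hle := state_chi_le_one φ hφ (↑T : Set G)
  have h1 : 1 < (n + 1 : ℝ) * ε := by
    have : 1 / ε < (n : ℝ) + 1 := lt_of_lt_of_le hn (by linarith)
    calc (1 : ℝ) = (1 / ε) * ε := by field_simp
      _ < ((n : ℝ) + 1) * ε := by
          exact mul_lt_mul_of_pos_right this hε
  linarith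

lemma tendsto_singleton_zero (hφ : IsState φ) (U : Ultrafilter G)
    (hnonpr : ∀ A : Set G, A.Finite → A ∉ U) (a : G) :
    Tendsto (fun j => φ (tau j (chi ({a} : Set G)))) ↑U (nhds 0) := by
  rw [Metric.tendsto_nhds]
  intro ε hε
  have hfin : {x : G | ε ≤ (φ (chi ({x} : Set G))).re}.Finite :=
    level_set_finite φ hφ hε
  have hpre : {j : G | ε ≤ (φ (chi ({a - j} : Set G))).re}.Finite := by
    have : {j : G | ε ≤ (φ (chi ({a - j} : Set G))).re} =
        (fun j => a - j) ⁻¹' {x : G | ε ≤ (φ (chi ({x} : Set G))).re} := rfl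
    rw [this]
    apply Set.Finite.preimage _ hfin
    intro x _ y _ hxy
    simp only at hxy
    rw [sub_eq_add_neg, sub_eq_add_neg] at hxy
    exact neg_injective (add_left_cancel hxy)
  have hmem : {j : G | ε ≤ (φ (chi ({a - j} : Set G))).re}ᶜ ∈ U := by
    rw [Ultrafilter.compl_mem_iff_notMem]
    exact hnonpr _ hpre
  filter_upwards [hmem] with j hj
  simp only [Set.mem_compl_iff, Set.mem_setOf_eq, not_le] at hj
  obtain ⟨r, hr, hrr⟩ := state_chi φ hφ ({a - j} : Set G)
  rw [tau_chi_singleton, dist_zero_right, hrr]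
  rw [hrr] at hj
  simpa [abs_of_nonneg hr] using lt_of_le_of_lt (le_of_eq (by simp)) hj

lemma tendsto_chi_zero (hφ : IsState φ) (U : Ultrafilter G)
    (hnonpr : ∀ A : Set G, A.Finite → A ∉ U) (I : Set G) (hI : I.Finite) :
    Tendsto (fun j => φ (tau j (chi I))) ↑U (nhds 0) := by
  refine Set.Finite.induction_on I hI ?_ ?_
  ·
    have : (fun j : G => φ (tau j (chi (∅ : Set G)))) = fun _ => 0 := by
      funext j
      rw [chi_empty]
      have : tau j (0 : lp (fun _ : G => ℂ) ∞) = 0 := by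
        apply lp.ext
        funext i
        simp [tau_apply, lp.coeFn_zero]
      rw [this, map_zero]
    rw [this]
    exact tendsto_const_nhds
  · intro a s ha hs ih
    have : (fun j : G => φ (tau j (chi (insert a s)))) =
        fun j => φ (tau j (chi ({a} : Set G))) + φ (tau j (chi s)) := by
      funext j
      rw [chi_insert a s ha, tau_add, map_add]
    rw [this]
    have := (tendsto_singleton_zero φ hφ U hnonpr a).add ih
    simpa using this

end Aux

theorem stmt_1 {G : Type*} [AddGroup G] (U : Ultrafilter G)
    (hnonpr : ∀ A : Set G, A.Finite → A ∉ U)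
    (hsigma : ∀ A : ℕ → Set G, (∀ n, A n ∈ U) → (⋂ n, A n) ∈ U)
    (φ : lp (fun _ : G => ℂ) ∞ →L[ℂ] ℂ) (hφ : IsState φ) :
    (∃ ψ : lp (fun _ : G => ℂ) ∞ →L[ℂ] ℂ, IsState ψ ∧
      ∀ f : lp (fun _ : G => ℂ) ∞,
        Tendsto (fun j => φ (tau j f)) ↑U (nhds (ψ f))) ∧
    ∀ ψ : lp (fun _ : G => ℂ) ∞ →L[ℂ] ℂ, IsState ψ →
      (∀ f : lp (fun _ : G => ℂ) ∞,
        Tendsto (fun j => φ (tau j f)) ↑U (nhds (ψ f))) →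
      ∀ I : Set G, I.Finite → ψ (chi I) = 0 := by
  constructor
  · -- existence
    have hex : ∀ f : lp (fun _ : G => ℂ) ∞,
        ∃ c : ℂ, Tendsto (fun j => φ (tau j f)) ↑U (nhds c) := by
      intro f
      set g : G → ℂ := fun j => φ (tau j f) with hg
      have hb : ∀ j, g j ∈ Metric.closedBall (0 : ℂ) (‖φ‖ * ‖f‖) := by
        intro j
        rw [Metric.mem_closedBall, dist_zero_right]
        calc ‖φ (tau j f)‖ ≤ ‖φ‖ * ‖tau j f‖ := φ.le_opNorm _
          _ ≤ ‖φ‖ * ‖f‖ := mul_le_mul_of_nonneg_left (norm_tau_le j f) (norm_nonneg φ)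
      obtain ⟨c, -, hc⟩ := (isCompact_closedBall (0 : ℂ) (‖φ‖ * ‖f‖)).ultrafilter_le_nhds
        (U.map g) (by
          rw [Ultrafilter.coe_map, le_principal_iff, mem_map]
          exact Filter.univ_mem' hb)
      exact ⟨c, by rwa [Ultrafilter.coe_map] at hc⟩
    choose c hc using hex
    have hadd : ∀ f g, c (f + g) = c f + c g := by
      intro f g
      have h1 : Tendsto (fun j => φ (tau j (f + g))) ↑U (nhds (c f + c g)) := by
        have : (fun j => φ (tau j (f + g))) =
            fun j => φ (tau j f) + φ (tau j g) := by
          funext j; rw [tau_add, map_add]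
        rw [this]
        exact (hc f).add (hc g)
      exact tendsto_nhds_unique (hc (f + g)) h1
    have hsmul : ∀ (r : ℂ) f, c (r • f) = r • c f := by
      intro r f
      have h1 : Tendsto (fun j => φ (tau j (r • f))) ↑U (nhds (r • c f)) := by
        have : (fun j => φ (tau j (r • f))) = fun j => r • φ (tau j f) := by
          funext j; rw [tau_smul, map_smul]
        rw [this]
        exact (hc f).const_smul r
      exact tendsto_nhds_unique (hc (r • f)) h1
    let L : lp (fun _ : G => ℂ) ∞ →ₗ[ℂ] ℂ :=
      { toFun := c, map_add' := hadd, map_smul' := hsmul }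
    have hbound : ∀ f, ‖L f‖ ≤ ‖φ‖ * ‖f‖ := by
      intro f
      refine le_of_tendsto (hc f).norm (Filter.univ_mem' fun j => ?_)
      calc ‖φ (tau j f)‖ ≤ ‖φ‖ * ‖tau j f‖ := φ.le_opNorm _
        _ ≤ ‖φ‖ * ‖f‖ := mul_le_mul_of_nonneg_left (norm_tau_le j f) (norm_nonneg φ)
    refine ⟨L.mkContinuous ‖φ‖ hbound, ⟨?_, ?_⟩, fun f => hc f⟩
    · -- map_one
      have h1 : Tendsto (fun j => φ (tau j (1 : lp (fun _ : G => ℂ) ∞))) ↑U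
          (nhds 1) := by
        have : (fun j : G => φ (tau j (1 : lp (fun _ : G => ℂ) ∞))) = fun _ => 1 := by
          funext j; rw [tau_one, hφ.map_one]
        rw [this]
        exact tendsto_const_nhds
      exact tendsto_nhds_unique (hc 1) h1
    · -- nonneg
      intro f hf
      have hval : ∀ j, ∃ r : ℝ, 0 ≤ r ∧ φ (tau j f) = r := by
        intro j
        apply hφ.nonneg
        intro i
        obtain ⟨r, hr, hrr⟩ := hf (i + j)
        exact ⟨r, hr, by rw [tau_apply]; exact hrr⟩
      have him : (c f).im = 0 := by
        have h1 : Tendsto (fun j => (φ (tau j f)).im) ↑U (nhds ((c f).im)) :=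
          (Complex.continuous_im.tendsto _).comp (hc f)
        have h2 : (fun j => (φ (tau j f)).im) = fun _ => 0 := by
          funext j
          obtain ⟨r, _, hrr⟩ := hval j
          rw [hrr]; simp
        rw [h2] at h1
        exact tendsto_nhds_unique h1 tendsto_const_nhds
      have hre : 0 ≤ (c f).re := by
        have h1 : Tendsto (fun j => (φ (tau j f)).re) ↑U (nhds ((c f).re)) :=
          (Complex.continuous_re.tendsto _).comp (hc f)
        refine ge_of_tendsto h1 (Filter.Eventually.of_forall fun j => ?_)
        obtain ⟨r, hr, hrr⟩ := hval j
        rw [hrr]; simpa using hr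
      refine ⟨(c f).re, hre, ?_⟩
      have hLf : (L.mkContinuous ‖φ‖ hbound) f = c f := rfl
      rw [hLf]
      exact Complex.ext (by simp) (by simpa using him)
  · -- singularity
    intro ψ hψ hten I hI
    exact tendsto_nhds_unique (hten (chi I)) (tendsto_chi_zero φ hφ U hnonpr I hI)
end

section
/- Let G be an additive group and U an ultrafilter on G closed under countable intersections. Let μ : Set G → ℝ be a finitely additive set function with 0 ≤ μ(A) ≤ 1 for all A, μ(G) = 1, which is σ-additive (for every pairwise disjoint sequence (A_n), μ(⋃_n A_n) = ∑'_n μ(A_n)). Suppose ν : Set G → ℝ satisfies: for every I ⊆ G, the function j ↦ μ(I - j) tends to ν(I) along U, where I - j := {i : i + j ∈ I}. Then ν is σ-additive: for every pairwise disjoint sequence (A_n) of subsets of G, ν(⋃_n A_n) = ∑'_n ν(A_n). -/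
open scoped ENNReal
open Filter

theorem stmt_3 {G : Type*} [AddGroup G] (U : Ultrafilter G)
    (hsigma : ∀ A : ℕ → Set G, (∀ n, A n ∈ U) → (⋂ n, A n) ∈ U)
    (μ : Set G → ℝ)
    (hadd : ∀ A B : Set G, Disjoint A B → μ (A ∪ B) = μ A + μ B)
    (hempty : μ ∅ = 0)
    (hbdd : ∀ A : Set G, 0 ≤ μ A ∧ μ A ≤ 1)
    (huniv : μ Set.univ = 1)
    (hμσ : ∀ A : ℕ → Set G, Pairwise (Function.onFun Disjoint A) →
      μ (⋃ n, A n) = ∑' n, μ (A n))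
    (ν : Set G → ℝ)
    (hν : ∀ I : Set G, Tendsto (fun j => μ {i | i + j ∈ I}) ↑U (nhds (ν I))) :
    ∀ A : ℕ → Set G, Pairwise (Function.onFun Disjoint A) →
      ν (⋃ n, A n) = ∑' n, ν (A n) := by
  intro A hA
  have hμ0 : ∀ S : Set G, 0 ≤ μ S := fun S => (hbdd S).1
  have hmono : ∀ {S T : Set G}, S ⊆ T → μ S ≤ μ T := by
    intro S T h
    have : μ T = μ S + μ (T \ S) := by
      rw [← hadd S (T \ S) Set.disjoint_sdiff_right, Set.union_diff_cancel h]
    linarith [hμ0 (T \ S)]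
  -- finite additivity
  have hfin : ∀ (B : ℕ → Set G), Pairwise (Function.onFun Disjoint B) → ∀ N : ℕ,
      μ (⋃ n ∈ Finset.range N, B n) = ∑ n ∈ Finset.range N, μ (B n) := by
    intro B hB N
    induction N with
    | zero => simpa using hempty
    | succ N ih =>
      rw [Finset.range_add_one, Finset.set_biUnion_insert, Finset.sum_insert (by simp)]
      rw [hadd _ _ ?_, ih]
      rw [Set.disjoint_iUnion₂_right]
      intro n hn
      exact hB (by simp at hn; omega)
  -- translation
  set tr : Set G → G → Set G := fun I j => {i | i + j ∈ I} with htr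
  have htrdisj : ∀ {S T : Set G} (j : G), Disjoint S T → Disjoint (tr S j) (tr T j) := by
    intro S T j h
    rw [Set.disjoint_left] at h ⊢
    intro i hi hi'; exact h hi hi'
  have htrU : ∀ (B : ℕ → Set G) (j : G), tr (⋃ n, B n) j = ⋃ n, tr (B n) j := by
    intro B j; ext i; simp [htr]
  -- tail sets
  set T : ℕ → Set G := fun N => ⋃ n, A (n + N) with hTdef
  have hTdisj : ∀ N : ℕ, Pairwise (Function.onFun Disjoint fun n => A (n + N)) :=
    fun N m n hmn => hA (by omega)
  -- per-j: summability of translated measures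
  have hsumj : ∀ j : G, Summable (fun n => μ (tr (A n) j)) := by
    intro j
    refine summable_of_sum_range_le (c := 1) (fun n => hμ0 _) (fun N => ?_)
    rw [← hfin (fun n => tr (A n) j) (fun m n h => htrdisj j (hA h)) N]
    exact huniv ▸ hmono (Set.subset_univ _)
  -- per-j: decomposition into head + tail
  have hdecomp : ∀ (N : ℕ) (j : G),
      μ (tr (⋃ n, A n) j) = ∑ n ∈ Finset.range N, μ (tr (A n) j) + μ (tr (T N) j) := by
    intro N j
    have h1 : μ (tr (⋃ n, A n) j) = ∑' n, μ (tr (A n) j) := by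
      rw [htrU]
      exact hμσ _ (fun m n h => htrdisj j (hA h))
    have h2 : μ (tr (T N) j) = ∑' n, μ (tr (A (n + N)) j) := by
      rw [hTdef]
      simp only
      rw [htrU]
      exact hμσ _ (fun m n h => htrdisj j (hTdisj N h))
    rw [h1, h2, Summable.sum_add_tsum_nat_add N (hsumj j)]
  -- ν is nonneg
  have hν0 : ∀ S : Set G, 0 ≤ ν S := fun S =>
    ge_of_tendsto' (hν S) (fun j => hμ0 _)
  -- key identity for ν
  have hkey : ∀ N : ℕ, ν (⋃ n, A n) = ∑ n ∈ Finset.range N, ν (A n) + ν (T N) := by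
    intro N
    refine tendsto_nhds_unique (hν (⋃ n, A n)) ?_
    have : Tendsto (fun j => ∑ n ∈ Finset.range N, μ (tr (A n) j) + μ (tr (T N) j)) ↑U
        (nhds (∑ n ∈ Finset.range N, ν (A n) + ν (T N))) :=
      Tendsto.add (tendsto_finset_sum _ (fun n _ => hν (A n))) (hν (T N))
    exact this.congr (fun j => (hdecomp N j).symm)
  -- ν (T N) → 0
  have htail : Tendsto (fun N => ν (T N)) atTop (nhds 0) := by
    rw [Metric.tendsto_atTop]
    intro ε hε
    by_contra hcon
    push_neg at hcon
    -- from hkey, ν (T N) is determined; show: there is j with μ (tr (T N) j) large for all N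
    -- first: for every N₀ there is N ≥ N₀ with dist (ν (T N)) 0 ≥ ε; but ν T is not
    -- necessarily monotone a priori, so instead show all ν (T N) ≥ ε/2 fails... use direct:
    have hge : ∀ N₀, ∃ N, N₀ ≤ N ∧ ε ≤ ν (T N) := by
      intro N₀
      obtain ⟨N, hN, hd⟩ := hcon N₀
      refine ⟨N, hN, ?_⟩
      rw [Real.dist_eq, abs_sub_comm, abs_of_nonpos (by linarith [hν0 (T N)])] at hd
      linarith
    -- ν T is antitone since T is antitone
    have hTanti : ∀ {M N : ℕ}, M ≤ N → T N ⊆ T M := by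
      intro M N h x hx
      simp only [hTdef, Set.mem_iUnion] at hx ⊢
      obtain ⟨n, hn⟩ := hx
      exact ⟨n + N - M, by rw [show n + N - M + M = n + N by omega]; exact hn⟩
    have hνmono : ∀ {S S' : Set G}, S ⊆ S' → ν S ≤ ν S' := by
      intro S S' h
      exact le_of_tendsto_of_tendsto' (hν S) (hν S') (fun j => hmono (fun i hi => h hi))
    have hall : ∀ N, ε ≤ ν (T N) := by
      intro N
      obtain ⟨M, hM, hMε⟩ := hge N
      exact le_trans hMε (hνmono (hTanti hM))
    -- build the sets in U
    have hB : ∀ N, {j | ε / 2 < μ (tr (T N) j)} ∈ U := by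
      intro N
      have := (hν (T N)) (Ioi_mem_nhds (show ε / 2 < ν (T N) by linarith [hall N]))
      exact this
    obtain ⟨j, hj⟩ := Ultrafilter.nonempty_of_mem (hsigma _ hB)
    simp only [Set.mem_iInter, Set.mem_setOf_eq] at hj
    -- but tail sums of a summable series go to 0
    have h2 : Tendsto (fun N => μ (tr (T N) j)) atTop (nhds 0) := by
      have heq : ∀ N, μ (tr (T N) j) = ∑' n, μ (tr (A (n + N)) j) := by
        intro N
        rw [hTdef]; simp only; rw [htrU]
        exact hμσ _ (fun m n h => htrdisj j (hTdisj N h))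
      exact (tendsto_sum_nat_add (fun n => μ (tr (A n) j))).congr (fun N => (heq N).symm)
    have := h2.eventually (eventually_lt_nhds (show (0:ℝ) < ε / 2 by linarith))
    obtain ⟨N, hN⟩ := this.exists
    exact absurd (hj N) (not_lt.2 hN.le)
  -- conclude
  have hps : Tendsto (fun N => ∑ n ∈ Finset.range N, ν (A n)) atTop (nhds (ν (⋃ n, A n))) := by
    have : Tendsto (fun N => ν (⋃ n, A n) - ν (T N)) atTop (nhds (ν (⋃ n, A n) - 0)) :=
      (tendsto_const_nhds.sub htail)
    simpa using this.congr (fun N => by linarith [hkey N])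
  have hsummable : Summable (fun n => ν (A n)) := by
    refine summable_of_sum_range_le (c := ν (⋃ n, A n)) (fun n => hν0 _) (fun N => ?_)
    linarith [hkey N, hν0 (T N)]
  exact tendsto_nhds_unique hps hsummable.hasSum.tendsto_sum_nat
end

section
/- Let U be an ultrafilter on κ. Then there exists a unique state φ_U on ℓ∞(κ) such that for every f ∈ ℓ∞(κ), f tends to φ_U(f) along U; its induced measure satisfies ν_{φ_U}(I) = 1 if I ∈ U and ν_{φ_U}(I) = 0 otherwise. If moreover U is σ-complete and nonprincipal, then φ_U is singular and σ-additive. -/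
open scoped ENNReal
open Filter

section aux
variable {κ : Type*} (U : Ultrafilter κ)

lemma exists_tendsto_ulim (f : lp (fun _ : κ => ℂ) ∞) :
    ∃ z : ℂ, Tendsto (fun i => f i) ↑U (nhds z) := by
  have hmaps : ∀ i, f i ∈ Metric.closedBall (0 : ℂ) ‖f‖ := fun i => by
    rw [Metric.mem_closedBall, dist_zero_right]
    exact lp.norm_apply_le_norm ENNReal.top_ne_zero f i
  obtain ⟨z, _, hz⟩ := (isCompact_closedBall (0 : ℂ) ‖f‖).ultrafilter_le_nhds
    (U.map fun i => f i) (by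
      refine Filter.le_principal_iff.2 ?_
      rw [Ultrafilter.coe_map, Filter.mem_map]
      exact Filter.univ_mem' hmaps)
  exact ⟨z, hz⟩

noncomputable def ulim (f : lp (fun _ : κ => ℂ) ∞) : ℂ :=
  Classical.choose (exists_tendsto_ulim U f)

lemma ulim_spec (f : lp (fun _ : κ => ℂ) ∞) :
    Tendsto (fun i => f i) ↑U (nhds (ulim U f)) :=
  Classical.choose_spec (exists_tendsto_ulim U f)

lemma ulim_eq {f : lp (fun _ : κ => ℂ) ∞} {z : ℂ}
    (h : Tendsto (fun i => f i) ↑U (nhds z)) : ulim U f = z :=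
  tendsto_nhds_unique (ulim_spec U f) h

noncomputable def phiU : lp (fun _ : κ => ℂ) ∞ →L[ℂ] ℂ :=
  LinearMap.mkContinuous
    { toFun := ulim U
      map_add' := fun f g => ulim_eq U (by
        have : (fun i => (f + g) i) = fun i => f i + g i := by
          ext i; exact lp.coeFn_add f g ▸ rfl
        rw [this]
        exact (ulim_spec U f).add (ulim_spec U g))
      map_smul' := fun c f => ulim_eq U (by
        have : (fun i => (c • f) i) = fun i => c • f i := by
          ext i; exact lp.coeFn_smul c f ▸ rfl
        rw [this]
        exact (ulim_spec U f).const_smul c) }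
    1 (fun f => by
      simp only [LinearMap.coe_mk, AddHom.coe_mk, one_mul]
      refine le_of_tendsto ((ulim_spec U f).norm) ?_
      exact Eventually.of_forall fun i => lp.norm_apply_le_norm ENNReal.top_ne_zero f i)

lemma phiU_apply (f : lp (fun _ : κ => ℂ) ∞) : phiU U f = ulim U f := rfl

end aux

theorem stmt_8 {κ : Type*} [Infinite κ] (U : Ultrafilter κ) :
    (∃! φ : lp (fun _ : κ => ℂ) ∞ →L[ℂ] ℂ, IsState φ ∧
      ∀ f : lp (fun _ : κ => ℂ) ∞, Tendsto (fun i => f i) ↑U (nhds (φ f))) ∧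
    ∀ φ : lp (fun _ : κ => ℂ) ∞ →L[ℂ] ℂ,
      (IsState φ ∧ ∀ f : lp (fun _ : κ => ℂ) ∞,
        Tendsto (fun i => f i) ↑U (nhds (φ f))) →
      (∀ I : Set κ, (I ∈ U → φ (chi I) = 1) ∧ (I ∉ U → φ (chi I) = 0)) ∧
      ((∀ A : Set κ, A.Finite → A ∉ U) →
        (∀ A : ℕ → Set κ, (∀ n, A n ∈ U) → (⋂ n, A n) ∈ U) →
        (∀ I : Set κ, I.Finite → φ (chi I) = 0) ∧
        (∀ A : ℕ → Set κ, Pairwise (Function.onFun Disjoint A) →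
          φ (chi (⋃ n, A n)) = ∑' n, φ (chi (A n)))) := by
  have hchi : ∀ (φ : lp (fun _ : κ => ℂ) ∞ →L[ℂ] ℂ),
      (∀ f : lp (fun _ : κ => ℂ) ∞, Tendsto (fun i => f i) ↑U (nhds (φ f))) →
      ∀ I : Set κ, (I ∈ U → φ (chi I) = 1) ∧ (I ∉ U → φ (chi I) = 0) := by
    intro φ hφ I
    constructor
    · intro hI
      refine tendsto_nhds_unique (hφ (chi I)) ?_
      refine tendsto_nhds_of_eventually_eq ?_
      filter_upwards [hI] with i hi
      simp [chi, Set.indicator_of_mem hi]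
    · intro hI
      refine tendsto_nhds_unique (hφ (chi I)) ?_
      refine tendsto_nhds_of_eventually_eq ?_
      filter_upwards [Ultrafilter.compl_mem_iff_notMem.2 hI] with i hi
      simp [chi, Set.indicator_of_notMem hi]
  constructor
  · refine ⟨phiU U, ⟨⟨?_, ?_⟩, fun f => ulim_spec U f⟩, ?_⟩
    · refine ulim_eq U ?_
      have : (fun i => (1 : lp (fun _ : κ => ℂ) ∞) i) = fun _ => (1 : ℂ) := by
        ext i; exact congrFun (lp.infty_coeFn_one) i
      rw [this]; exact tendsto_const_nhds
    · intro f hf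
      have hcl : IsClosed {z : ℂ | 0 ≤ z.re ∧ z.im = 0} :=
        (isClosed_le continuous_const Complex.continuous_re).inter
          (isClosed_eq Complex.continuous_im continuous_const)
      have hmem : (phiU U f) ∈ {z : ℂ | 0 ≤ z.re ∧ z.im = 0} := by
        refine hcl.mem_of_tendsto (ulim_spec U f) ?_
        refine Eventually.of_forall fun i => ?_
        obtain ⟨r, hr, hfr⟩ := hf i
        simp [hfr, hr]
      refine ⟨(phiU U f).re, hmem.1, ?_⟩
      exact Complex.ext (by simp) (by simp [hmem.2])
    · rintro ψ ⟨-, hψ⟩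
      ext f
      exact tendsto_nhds_unique (hψ f) (ulim_spec U f)
  · rintro φ ⟨hst, hφ⟩
    refine ⟨hchi φ hφ, fun hnp hσ => ?_⟩
    constructor
    · intro I hI
      exact (hchi φ hφ I).2 (hnp I hI)
    · intro A hA
      by_cases h : ∃ n, A n ∈ U
      · obtain ⟨n, hn⟩ := h
        have hunion : (⋃ m, A m) ∈ U := Filter.mem_of_superset hn (Set.subset_iUnion A n)
        have hterm : ∀ m, φ (chi (A m)) = if m = n then 1 else 0 := by
          intro m
          by_cases hmn : m = n
          · subst hmn; simp [(hchi φ hφ (A m)).1 hn]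
          · have : A m ∉ U := by
              intro hm
              have := U.inter_mem hm hn
              rw [Set.disjoint_iff_inter_eq_empty.1 (hA hmn)] at this
              exact U.empty_notMem this
            simp [hmn, (hchi φ hφ (A m)).2 this]
        rw [(hchi φ hφ _).1 hunion]
        rw [tsum_eq_single n (fun m hm => by rw [hterm m]; simp [hm])]
        simp [hterm n]
      · push_neg at h
        have hcompl : ∀ n, (A n)ᶜ ∈ U := fun n =>
          Ultrafilter.compl_mem_iff_notMem.2 (h n)
        have : (⋂ n, (A n)ᶜ) ∈ U := hσ _ hcompl
        rw [← Set.compl_iUnion] at this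
        have hnotU : (⋃ n, A n) ∉ U := fun hc => by
          have h2 := U.inter_mem hc this
          rw [Set.inter_compl_self] at h2
          exact U.empty_notMem h2
        rw [(hchi φ hφ _).2 hnotU]
        simp [fun n => (hchi φ hφ (A n)).2 (h n)]
end
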